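/- Let p be a prime, p^r a prime power, and n ≥ p^r. Let λ and μ be p^r-stable partitions of n and let H ≤ S_{p^r} be a subgroup whose action on B is transitive. Consider the diagonal S_n-action on Tab^λ × Tab^μ. Then the inclusion of the set (Tab^λ × Tab^μ)^H of H-fixed pairs into Tab^λ × Tab^μ induces a bijection from the set of S_{n−p^r}-orbits on (Tab^λ × Tab^μ)^H to the set of S_n-orbits on Tab^λ × Tab^μ; concretely, every S_n-orbit on Tab^λ × Tab^μ contains an H-fixed pair, and two H-fixed pairs lie in the same S_n-orbit if and only if they lie in the same S_{n−p^r}-orbit. -/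

import Mathlib

/-- `f : Fin n → Fin ℓ` is a tableau of shape `lam`: the fiber over `i` has
cardinality `lam i`. -/
def TabP {n ℓ : ℕ} (lam : Fin ℓ → ℕ) (f : Fin n → Fin ℓ) : Prop :=
  ∀ i : Fin ℓ, (Finset.univ.filter fun a => f a = i).card = lam i

open Finset

lemma card_filter_comp {α : Type*} [Fintype α] [DecidableEq α] (e : Equiv.Perm α)
    (P : α → Prop) [DecidablePred P] :
    (univ.filter fun a => P (e a)).card = (univ.filter P).card :=
  Finset.card_equiv e (by simp)

lemma exists_perm_comp {α β : Type*} [Fintype α] [DecidableEq α] [DecidableEq β]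
    (g g' : α → β)
    (h : ∀ b, (Finset.univ.filter fun a => g a = b).card
            = (Finset.univ.filter fun a => g' a = b).card) :
    ∃ φ : Equiv.Perm α, g ∘ ⇑φ = g' := by
  have e : ∀ c, { a // g' a = c } ≃ { a // g a = c } := fun c =>
    Fintype.equivOfCardEq (by
      rw [Fintype.card_subtype, Fintype.card_subtype]
      exact (h c).symm)
  exact ⟨Equiv.ofFiberEquiv e, funext fun a => Equiv.ofFiberEquiv_map e a⟩

lemma card_filter_le_fin {n k : ℕ} (hn : 0 < n) (hk : k ≤ n) :
    (univ.filter fun a : Fin n => n - k ≤ (a : ℕ)).card = k := by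
  have h1 : (univ.filter fun a : Fin n => n - k ≤ (a : ℕ)).card
      = ((Finset.range n).filter fun x => n - k ≤ x).card := by
    refine Finset.card_nbij' (i := fun a => (a : ℕ))
      (j := fun x => (⟨x % n, Nat.mod_lt _ hn⟩ : Fin n)) ?_ ?_ ?_ ?_
    · intro a ha; simp only [mem_coe, mem_filter, mem_range, mem_univ, true_and] at *
      exact ⟨a.isLt, ha⟩
    · intro x hx; simp only [mem_coe, mem_filter, mem_range, mem_univ, true_and] at *
      rw [Nat.mod_eq_of_lt hx.1]; exact hx.2
    · intro a _; simp [Nat.mod_eq_of_lt a.isLt]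
    · intro x hx; simp only [mem_coe, mem_filter, mem_range] at hx
      simp [Nat.mod_eq_of_lt hx.1]
  rw [h1]
  have h2 : (Finset.range n).filter (fun x => n - k ≤ x) = Finset.Ico (n - k) n := by
    ext x; simp [Finset.mem_Ico, and_comm]
  rw [h2, Nat.card_Ico]; omega

lemma const_zero {n ℓ k : ℕ} (hk : 0 < k) (hkn : k ≤ n) (hl : 0 < ℓ)
    (lam : Fin ℓ → ℕ) (hlsum : ∑ i, lam i = n) (hstab : n - lam ⟨0, hl⟩ < k)
    (s : Fin n → Fin ℓ) (hs : TabP lam s)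
    (hconst : ∀ a b : Fin n, n - k ≤ (a : ℕ) → n - k ≤ (b : ℕ) → s a = s b) :
    ∀ a : Fin n, n - k ≤ (a : ℕ) → s a = ⟨0, hl⟩ := by
  intro a ha
  by_contra hne
  have hsub : (univ.filter fun x : Fin n => n - k ≤ (x : ℕ))
      ⊆ univ.filter (fun x => s x = s a) := by
    intro x hx
    simp only [mem_filter, mem_univ, true_and] at *
    exact hconst x a hx ha
  have h1 : k ≤ lam (s a) := by
    have := Finset.card_le_card hsub
    rwa [card_filter_le_fin (lt_of_lt_of_le hk hkn) hkn, hs (s a)] at this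
  have h2 : lam (s a) + lam ⟨0, hl⟩ ≤ n := by
    have hp : ({s a, ⟨0, hl⟩} : Finset (Fin ℓ)).sum lam ≤ ∑ i, lam i :=
      Finset.sum_le_sum_of_subset (Finset.subset_univ _)
    rwa [Finset.sum_pair hne, hlsum] at hp
  omega

/-- for `p^r`-stable partitions `λ, μ` of `n` and a transitive subgroup
`H ≤ S_{p^r}`, the inclusion of the `H`-fixed pairs into `Tab^λ × Tab^μ` induces a
bijection on orbit sets: every `S_n`-orbit contains an `H`-fixed pair, and two `H`-fixed
pairs lie in the same `S_n`-orbit iff they lie in the same `S_{n−p^r}`-orbit. -/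
theorem stmt9 (p r n ℓ m : ℕ) (hp : p.Prime) (hn : p ^ r ≤ n)
    (hl : 0 < ℓ) (hm : 0 < m)
    (lam : Fin ℓ → ℕ) (hlanti : Antitone lam) (hlpos : ∀ i, 0 < lam i)
    (hlsum : ∑ i, lam i = n)
    (hlstab : n - lam ⟨0, hl⟩ < p ^ r ∧ n + p ^ r ≤ 2 * lam ⟨0, hl⟩)
    (mu : Fin m → ℕ) (hmanti : Antitone mu) (hmpos : ∀ j, 0 < mu j)
    (hmsum : ∑ j, mu j = n)
    (hmstab : n - mu ⟨0, hm⟩ < p ^ r ∧ n + p ^ r ≤ 2 * mu ⟨0, hm⟩)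
    (H : Subgroup (Equiv.Perm (Fin n)))
    (hH : ∀ σ ∈ H, ∀ a : Fin n, (a : ℕ) < n - p ^ r → σ a = a)
    (htrans : ∀ a b : Fin n, n - p ^ r ≤ (a : ℕ) → n - p ^ r ≤ (b : ℕ) →
      ∃ σ ∈ H, σ a = b) :
    -- every `S_n`-orbit on `Tab^λ × Tab^μ` contains an `H`-fixed pair
    (∀ (s : Fin n → Fin ℓ) (t : Fin n → Fin m), TabP lam s → TabP mu t →
      ∃ (s' : Fin n → Fin ℓ) (t' : Fin n → Fin m), TabP lam s' ∧ TabP mu t' ∧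
        (∀ σ ∈ H, s' ∘ ⇑σ⁻¹ = s' ∧ t' ∘ ⇑σ⁻¹ = t') ∧
        ∃ π : Equiv.Perm (Fin n), s ∘ ⇑π⁻¹ = s' ∧ t ∘ ⇑π⁻¹ = t') ∧
    -- two `H`-fixed pairs lie in the same `S_n`-orbit iff in the same `S_{n−p^r}`-orbit
    (∀ (s s' : Fin n → Fin ℓ) (t t' : Fin n → Fin m),
      TabP lam s → TabP mu t → TabP lam s' → TabP mu t' →
      (∀ σ ∈ H, s ∘ ⇑σ⁻¹ = s ∧ t ∘ ⇑σ⁻¹ = t) →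
      (∀ σ ∈ H, s' ∘ ⇑σ⁻¹ = s' ∧ t' ∘ ⇑σ⁻¹ = t') →
      ((∃ π : Equiv.Perm (Fin n), s ∘ ⇑π⁻¹ = s' ∧ t ∘ ⇑π⁻¹ = t') ↔
        ∃ π : Equiv.Perm (Fin n), (∀ a : Fin n, n - p ^ r ≤ (a : ℕ) → π a = a) ∧
          s ∘ ⇑π⁻¹ = s' ∧ t ∘ ⇑π⁻¹ = t')) := by
  have hpr : 0 < p ^ r := pow_pos hp.pos r
  have hn0 : 0 < n := lt_of_lt_of_le hpr hn
  have hBcard : (univ.filter fun a : Fin n => n - p ^ r ≤ (a : ℕ)).card = p ^ r :=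
    card_filter_le_fin hn0 hn
  constructor
  · -- Part 1
    intro s t hs ht
    have hFs := hs ⟨0, hl⟩
    have hFt := ht ⟨0, hm⟩
    have hunion : ((univ.filter fun a => s a = ⟨0, hl⟩)
        ∪ (univ.filter fun a => t a = ⟨0, hm⟩)).card ≤ n :=
      le_trans (Finset.card_le_univ _) (by simp)
    have hiu := Finset.card_union_add_card_inter
      (univ.filter fun a => s a = ⟨0, hl⟩) (univ.filter fun a => t a = ⟨0, hm⟩)
    have hl2 := hlstab.2
    have hm2 := hmstab.2
    have hinter : p ^ r ≤ ((univ.filter fun a => s a = ⟨0, hl⟩)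
        ∩ (univ.filter fun a => t a = ⟨0, hm⟩)).card := by omega
    obtain ⟨Y, hYsub, hYcard⟩ := Finset.exists_subset_card_eq hinter
    have hYmem : ∀ x ∈ Y, s x = ⟨0, hl⟩ ∧ t x = ⟨0, hm⟩ := by
      intro x hx
      have := hYsub hx
      simp only [Finset.mem_inter, mem_filter, mem_univ, true_and] at this
      exact this
    have hYuniv : (univ.filter fun a : Fin n => a ∈ Y).card = p ^ r := by
      rw [show (univ.filter fun a : Fin n => a ∈ Y) = Y by ext x; simp]
      exact hYcard
    have hfib : ∀ b : Bool,
        (univ.filter fun a : Fin n => decide (a ∈ Y) = b).card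
        = (univ.filter fun a : Fin n => decide (n - p ^ r ≤ (a : ℕ)) = b).card := by
      intro b
      have c1 := Finset.card_filter_add_card_filter_not
        (s := (univ : Finset (Fin n))) (p := fun a => a ∈ Y)
      have c2 := Finset.card_filter_add_card_filter_not
        (s := (univ : Finset (Fin n))) (p := fun a : Fin n => n - p ^ r ≤ (a : ℕ))
      cases b
      · simp only [decide_eq_false_iff_not]
        have hcu : (univ : Finset (Fin n)).card = n := by simp
        omega
      · simp only [decide_eq_true_eq]
        rw [hYuniv, hBcard]
    obtain ⟨φ, hφ⟩ := exists_perm_comp (fun a : Fin n => decide (a ∈ Y))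
      (fun a : Fin n => decide (n - p ^ r ≤ (a : ℕ))) hfib
    have hmem : ∀ a : Fin n, (φ a ∈ Y ↔ n - p ^ r ≤ (a : ℕ)) := by
      intro a
      have := congrFun hφ a
      simp only [Function.comp_apply] at this
      exact decide_eq_decide.mp this
    have hz : ∀ a : Fin n, n - p ^ r ≤ (a : ℕ) →
        s (φ a) = ⟨0, hl⟩ ∧ t (φ a) = ⟨0, hm⟩ :=
      fun a ha => hYmem _ ((hmem a).mpr ha)
    have hinB : ∀ (σ : Equiv.Perm (Fin n)), σ ∈ H → ∀ a : Fin n,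
        n - p ^ r ≤ (a : ℕ) → n - p ^ r ≤ ((σ⁻¹ a : Fin n) : ℕ) := by
      intro σ hσ a ha
      by_contra hc
      push_neg at hc
      have h1 := hH σ hσ (σ⁻¹ a) hc
      rw [Equiv.Perm.inv_def, Equiv.apply_symm_apply] at h1
      have : (a : ℕ) = ((σ⁻¹ a : Fin n) : ℕ) := congrArg Fin.val h1
      omega
    refine ⟨s ∘ ⇑φ, t ∘ ⇑φ, ?_, ?_, ?_, φ⁻¹, ?_, ?_⟩
    · exact fun i => (card_filter_comp φ fun x => s x = i).trans (hs i)
    · exact fun j => (card_filter_comp φ fun x => t x = j).trans (ht j)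
    · intro σ hσ
      constructor <;> funext a <;>
        simp only [Function.comp_apply] <;>
        by_cases ha : n - p ^ r ≤ (a : ℕ)
      · rw [(hz _ (hinB σ hσ a ha)).1, (hz _ ha).1]
      · push_neg at ha
        rw [hH σ⁻¹ (H.inv_mem hσ) a ha]
      · rw [(hz _ (hinB σ hσ a ha)).2, (hz _ ha).2]
      · push_neg at ha
        rw [hH σ⁻¹ (H.inv_mem hσ) a ha]
    · rw [inv_inv]
    · rw [inv_inv]
  · -- Part 2
    intro s s' t t' hs ht hs' ht' hfix hfix'
    constructor
    · rintro ⟨π, hπs, hπt⟩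
      have hconst : ∀ (β : Type) (u : Fin n → β), (∀ σ ∈ H, u ∘ ⇑σ⁻¹ = u) →
          ∀ a b : Fin n, n - p ^ r ≤ (a : ℕ) → n - p ^ r ≤ (b : ℕ) → u a = u b := by
        intro β u hu a b ha hb
        obtain ⟨σ, hσ, hab⟩ := htrans a b ha hb
        have h1 := congrFun (hu σ hσ) b
        simp only [Function.comp_apply] at h1
        rw [← hab, Equiv.Perm.inv_def, Equiv.symm_apply_apply, hab] at h1
        exact h1
      have hz_s := const_zero hpr hn hl lam hlsum hlstab.1 s hs
        (hconst _ s fun σ hσ => (hfix σ hσ).1)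
      have hz_t := const_zero hpr hn hm mu hmsum hmstab.1 t ht
        (hconst _ t fun σ hσ => (hfix σ hσ).2)
      have hz_s' := const_zero hpr hn hl lam hlsum hlstab.1 s' hs'
        (hconst _ s' fun σ hσ => (hfix' σ hσ).1)
      have hz_t' := const_zero hpr hn hm mu hmsum hmstab.1 t' ht'
        (hconst _ t' fun σ hσ => (hfix' σ hσ).2)
      have hπs' : ∀ a, s (π⁻¹ a) = s' a := fun a => congrFun hπs a
      have hπt' : ∀ a, t (π⁻¹ a) = t' a := fun a => congrFun hπt a
      have hfib : ∀ b : Fin ℓ × Fin m × Option (Fin n),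
          (univ.filter fun a =>
            (fun a : Fin n => (s a, t a,
              if n - p ^ r ≤ (a : ℕ) then some a else none)) a = b).card
          = (univ.filter fun a =>
            (fun a : Fin n => (s' a, t' a,
              if n - p ^ r ≤ (a : ℕ) then some a else none)) a = b).card := by
        rintro ⟨i, j, o⟩
        cases o with
        | some x =>
          congr 1
          apply Finset.filter_congr
          intro a _
          simp only [Prod.mk.injEq]
          constructor
          · rintro ⟨h1, h2, h3⟩
            by_cases hP : n - p ^ r ≤ (a : ℕ)
            · rw [if_pos hP] at h3 ⊢
              exact ⟨by rw [hz_s' a hP, ← hz_s a hP, h1],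
                by rw [hz_t' a hP, ← hz_t a hP, h2], h3⟩
            · rw [if_neg hP] at h3
              exact absurd h3 (by simp)
          · rintro ⟨h1, h2, h3⟩
            by_cases hP : n - p ^ r ≤ (a : ℕ)
            · rw [if_pos hP] at h3 ⊢
              exact ⟨by rw [hz_s a hP, ← hz_s' a hP, h1],
                by rw [hz_t a hP, ← hz_t' a hP, h2], h3⟩
            · rw [if_neg hP] at h3
              exact absurd h3 (by simp)
        | none =>
          have hgoal1 : (univ.filter fun a : Fin n =>
              (s a, t a, if n - p ^ r ≤ (a : ℕ) then some a else none)
                = ((i, j, none) : Fin ℓ × Fin m × Option (Fin n)))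
              = univ.filter fun a : Fin n =>
                (s a = i ∧ t a = j) ∧ ¬ (n - p ^ r ≤ (a : ℕ)) := by
            apply Finset.filter_congr
            intro a _
            simp only [Prod.mk.injEq]
            constructor
            · rintro ⟨h1, h2, h3⟩
              refine ⟨⟨h1, h2⟩, fun hP => ?_⟩
              rw [if_pos hP] at h3
              cases h3
            · rintro ⟨⟨h1, h2⟩, hP⟩
              exact ⟨h1, h2, if_neg hP⟩
          have hgoal2 : (univ.filter fun a : Fin n =>
              (s' a, t' a, if n - p ^ r ≤ (a : ℕ) then some a else none)
                = ((i, j, none) : Fin ℓ × Fin m × Option (Fin n)))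
              = univ.filter fun a : Fin n =>
                (s' a = i ∧ t' a = j) ∧ ¬ (n - p ^ r ≤ (a : ℕ)) := by
            apply Finset.filter_congr
            intro a _
            simp only [Prod.mk.injEq]
            constructor
            · rintro ⟨h1, h2, h3⟩
              refine ⟨⟨h1, h2⟩, fun hP => ?_⟩
              rw [if_pos hP] at h3
              cases h3
            · rintro ⟨⟨h1, h2⟩, hP⟩
              exact ⟨h1, h2, if_neg hP⟩
          have hA : (univ.filter fun a : Fin n => s a = i ∧ t a = j).card
              = (univ.filter fun a : Fin n => s' a = i ∧ t' a = j).card := by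
            rw [← card_filter_comp π⁻¹ (fun x : Fin n => s x = i ∧ t x = j)]
            congr 1
            apply Finset.filter_congr
            intro a _
            rw [hπs' a, hπt' a]
          have split1 := Finset.card_filter_add_card_filter_not
            (s := univ.filter fun a : Fin n => s a = i ∧ t a = j)
            (p := fun a : Fin n => n - p ^ r ≤ (a : ℕ))
          have split2 := Finset.card_filter_add_card_filter_not
            (s := univ.filter fun a : Fin n => s' a = i ∧ t' a = j)
            (p := fun a : Fin n => n - p ^ r ≤ (a : ℕ))
          rw [Finset.filter_filter, Finset.filter_filter] at split1 split2
          have hBint1 : (univ.filter fun a : Fin n =>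
              (s a = i ∧ t a = j) ∧ n - p ^ r ≤ (a : ℕ)).card
              = (univ.filter fun a : Fin n =>
              ((⟨0, hl⟩ : Fin ℓ) = i ∧ (⟨0, hm⟩ : Fin m) = j) ∧ n - p ^ r ≤ (a : ℕ)).card := by
            congr 1
            apply Finset.filter_congr
            intro a _
            constructor
            · rintro ⟨⟨h1, h2⟩, hP⟩
              exact ⟨⟨by rw [← h1, hz_s a hP], by rw [← h2, hz_t a hP]⟩, hP⟩
            · rintro ⟨⟨h1, h2⟩, hP⟩
              exact ⟨⟨by rw [← h1]; exact hz_s a hP, by rw [← h2]; exact hz_t a hP⟩, hP⟩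
          have hBint2 : (univ.filter fun a : Fin n =>
              (s' a = i ∧ t' a = j) ∧ n - p ^ r ≤ (a : ℕ)).card
              = (univ.filter fun a : Fin n =>
              ((⟨0, hl⟩ : Fin ℓ) = i ∧ (⟨0, hm⟩ : Fin m) = j) ∧ n - p ^ r ≤ (a : ℕ)).card := by
            congr 1
            apply Finset.filter_congr
            intro a _
            constructor
            · rintro ⟨⟨h1, h2⟩, hP⟩
              exact ⟨⟨by rw [← h1, hz_s' a hP], by rw [← h2, hz_t' a hP]⟩, hP⟩
            · rintro ⟨⟨h1, h2⟩, hP⟩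
              exact ⟨⟨by rw [← h1]; exact hz_s' a hP, by rw [← h2]; exact hz_t' a hP⟩, hP⟩
          simp only []
          rw [hgoal1, hgoal2]
          omega
      obtain ⟨φ, hφ⟩ := exists_perm_comp _ _ hfib
      have hφ' : ∀ a : Fin n, s (φ a) = s' a ∧ t (φ a) = t' a ∧
          (if n - p ^ r ≤ ((φ a : Fin n) : ℕ) then some (φ a) else none)
            = (if n - p ^ r ≤ (a : ℕ) then some a else none) := by
        intro a
        have := congrFun hφ a
        simp only [Function.comp_apply, Prod.mk.injEq] at this
        exact this
      refine ⟨φ⁻¹, ?_, ?_, ?_⟩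
      · intro a ha
        obtain ⟨-, -, h3⟩ := hφ' a
        rw [if_pos ha] at h3
        have hφa : φ a = a := by
          by_cases hc : n - p ^ r ≤ ((φ a : Fin n) : ℕ)
          · rw [if_pos hc] at h3
            exact Option.some.inj h3
          · rw [if_neg hc] at h3
            exact absurd h3 (by simp)
        have h4 : φ⁻¹ a = φ⁻¹ (φ a) := by rw [hφa]
        rw [h4, Equiv.Perm.inv_def, Equiv.symm_apply_apply]
      · rw [inv_inv]
        exact funext fun a => (hφ' a).1
      · rw [inv_inv]
        exact funext fun a => (hφ' a).2.1
    · rintro ⟨π, -, h1, h2⟩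
      exact ⟨π, h1, h2⟩
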